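/- Let 1 ≤ p < ∞, let {h_α : α ∈ 𝒜_∞} be a Haar-like system on A ∈ Σ⁺ in L_p = L_p(Ω,Σ,μ), let X be a Banach space, let ε > 0, and let (ε_α)_{α ∈ 𝒜_∞} be positive numbers with ∑_α ε_α / ‖h_α‖_p ≤ ε/2 (note ‖h_α‖_p = (2^{−n} μ(A))^{1/p} for α ∈ 𝒜ₙ). If (x_α)_{α ∈ 𝒜_∞} is a family of vectors in X with ‖x_α‖ ≤ ε_α for all α, then there exists a bounded linear operator U from the closed linear span of {h_α : α ∈ 𝒜_∞} in L_p to X such that U h_α = x_α for all α ∈ 𝒜_∞ and ‖U‖ ≤ ε. -/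

import Mathlib

open MeasureTheory ENNReal Set Filter

noncomputable section

variable {Ω : Type*} [MeasurableSpace Ω]

/-- `f ∈ L_p(μ)` is a *sign supported on* `A`: `f = χ_{B₁} - χ_{B₂}` where `B₁, B₂`
form a partition of `A` into two measurable subsets of equal measure. -/
def IsSignOn (μ : Measure Ω) [IsFiniteMeasure μ] (p : ℝ≥0∞) [Fact (1 ≤ p)]
    (f : Lp ℝ p μ) (A : Set Ω) : Prop :=
  ∃ (B₁ B₂ : Set Ω) (h₁ : MeasurableSet B₁) (h₂ : MeasurableSet B₂),
    Disjoint B₁ B₂ ∧ B₁ ∪ B₂ = A ∧ μ B₁ = μ B₂ ∧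
    f = indicatorConstLp p h₁ (measure_ne_top μ B₁) (1 : ℝ) -
        indicatorConstLp p h₂ (measure_ne_top μ B₂) (1 : ℝ)

/-- `T : L_p(μ) → X` is *PP-narrow*: for every measurable `A` of nonzero measure and
every `ε > 0` there is a sign `f` supported on `A` with `‖T f‖ ≤ ε`. -/
def PPNarrow (μ : Measure Ω) [IsFiniteMeasure μ] (p : ℝ≥0∞) [Fact (1 ≤ p)]
    {X : Type*} [NormedAddCommGroup X] [NormedSpace ℝ X]
    (T : Lp ℝ p μ →L[ℝ] X) : Prop :=
  ∀ A : Set Ω, MeasurableSet A → 0 < μ A →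
    ∀ ε : ℝ, 0 < ε → ∃ f : Lp ℝ p μ, IsSignOn μ p f A ∧ ‖T f‖ ≤ ε

/-- A *tree of subsets* on `A`, indexed by finite ±1-tuples (modelled as `List Bool`,
`true ↔ 1`, `false ↔ -1`): `t [] = A` and for every `α` the sets `t (α ++ [true])` and
`t (α ++ [false])` form a partition of `t α` into two measurable subsets of equal measure. -/
structure IsTreeOn (μ : Measure Ω) (A : Set Ω) (t : List Bool → Set Ω) : Prop where
  root : t [] = A
  meas : ∀ α, MeasurableSet (t α)
  disj : ∀ α, Disjoint (t (α ++ [true])) (t (α ++ [false]))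
  union : ∀ α, t (α ++ [true]) ∪ t (α ++ [false]) = t α
  eqmeas : ∀ α, μ (t (α ++ [true])) = μ (t (α ++ [false]))

/-- The *Haar-like system* corresponding to a tree of subsets:
`h_α = χ_{A_{α,1}} - χ_{A_{α,-1}}`, as an element of `L_p(μ)`. -/
def haarFn (μ : Measure Ω) [IsFiniteMeasure μ] (p : ℝ≥0∞) [Fact (1 ≤ p)]
    (t : List Bool → Set Ω) (ht : ∀ α, MeasurableSet (t α)) (α : List Bool) : Lp ℝ p μ :=
  indicatorConstLp p (ht (α ++ [true])) (measure_ne_top μ _) (1 : ℝ) -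
  indicatorConstLp p (ht (α ++ [false])) (measure_ne_top μ _) (1 : ℝ)

/-- Each Haar-like function belongs to the closed linear span of the Haar-like system. -/
theorem haarFn_mem_closedSpan (μ : Measure Ω) [IsFiniteMeasure μ] (p : ℝ≥0∞) [Fact (1 ≤ p)]
    (t : List Bool → Set Ω) (ht : ∀ α, MeasurableSet (t α)) (α : List Bool) :
    haarFn μ p t ht α ∈
      (Submodule.span ℝ (Set.range (haarFn μ p t ht))).topologicalClosure :=
  Submodule.le_topologicalClosure _ (Submodule.subset_span ⟨α, rfl⟩)

section Aux

variable {μ : Measure Ω} {A : Set Ω} {t : List Bool → Set Ω}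

private lemma IsTreeOn.child_subset (ht : IsTreeOn μ A t) (α : List Bool) (b : Bool) :
    t (α ++ [b]) ⊆ t α := by
  conv_rhs => rw [← ht.union α]
  cases b
  · exact Set.subset_union_right
  · exact Set.subset_union_left

private lemma IsTreeOn.append_subset (ht : IsTreeOn μ A t) (α γ : List Bool) :
    t (α ++ γ) ⊆ t α := by
  induction γ using List.reverseRecOn with
  | nil => simp
  | append_singleton γ b ih =>
      calc t (α ++ (γ ++ [b])) = t ((α ++ γ) ++ [b]) := by rw [List.append_assoc]
      _ ⊆ t (α ++ γ) := ht.child_subset _ b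
      _ ⊆ t α := ih

private lemma IsTreeOn.subset_of_prefix (ht : IsTreeOn μ A t) {α β : List Bool}
    (h : α <+: β) : t β ⊆ t α := by
  obtain ⟨γ, rfl⟩ := h
  exact ht.append_subset α γ

private lemma IsTreeOn.measure_eq_two_mul (ht : IsTreeOn μ A t) (α : List Bool) (b : Bool) :
    μ (t α) = 2 * μ (t (α ++ [b])) := by
  have h := measure_union (μ := μ) (ht.disj α) (ht.meas (α ++ [false]))
  rw [ht.union α, ht.eqmeas α] at h
  cases b
  · rw [h, two_mul]
  · rw [h, two_mul, ht.eqmeas α]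

private lemma IsTreeOn.measure_pos (ht : IsTreeOn μ A t) (hA0 : 0 < μ A) (α : List Bool) :
    0 < μ (t α) := by
  induction α using List.reverseRecOn with
  | nil => rwa [ht.root]
  | append_singleton γ b ih =>
      rcases eq_or_ne (μ (t (γ ++ [b]))) 0 with h | h
      · exfalso
        have := ht.measure_eq_two_mul γ b
        rw [h, mul_zero] at this
        exact absurd this ih.ne'
      · exact pos_iff_ne_zero.mpr h

private lemma List.exists_diverge {β γ : List Bool} (h1 : ¬ β <+: γ) (h2 : ¬ γ <+: β) :
    ∃ (δ β' γ' : List Bool) (b : Bool),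
      β = δ ++ [b] ++ β' ∧ γ = δ ++ [!b] ++ γ' := by
  induction β generalizing γ with
  | nil => exact absurd (List.nil_prefix) h1
  | cons a β'' ih =>
      cases γ with
      | nil => exact absurd (List.nil_prefix) h2
      | cons c γ'' =>
          by_cases hac : a = c
          · subst hac
            have h1' : ¬ β'' <+: γ'' := fun h => h1 (by simp [h])
            have h2' : ¬ γ'' <+: β'' := fun h => h2 (by simp [h])
            obtain ⟨δ, β', γ', b, hb, hg⟩ := ih h1' h2'
            exact ⟨a :: δ, β', γ', b, by simp [hb], by simp [hg]⟩
          · cases a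
            · cases c
              · exact absurd rfl hac
              · exact ⟨[], β'', γ'', false, by simp, by simp⟩
            · cases c
              · exact ⟨[], β'', γ'', true, by simp, by simp⟩
              · exact absurd rfl hac

private lemma IsTreeOn.disjoint_of_incomparable (ht : IsTreeOn μ A t) {β γ : List Bool}
    (h1 : ¬ β <+: γ) (h2 : ¬ γ <+: β) : Disjoint (t β) (t γ) := by
  obtain ⟨δ, β', γ', b, hb, hg⟩ := List.exists_diverge h1 h2
  have hd : Disjoint (t (δ ++ [b])) (t (δ ++ [!b])) := by
    cases b
    · exact (ht.disj δ).symm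
    · exact ht.disj δ
  exact hd.mono (hb ▸ ht.subset_of_prefix ⟨β', by simp⟩)
    (hg ▸ ht.subset_of_prefix ⟨γ', by simp⟩)

end Aux

section Aux2

variable (μ : Measure Ω) [IsFiniteMeasure μ] (p : ℝ≥0∞) [Fact (1 ≤ p)]

private def setIntLM (S₁ S₂ : Set Ω) : Lp ℝ p μ →ₗ[ℝ] ℝ where
  toFun f := (∫ a in S₁, f a ∂μ) - ∫ a in S₂, f a ∂μ
  map_add' f g := by
    have hf := ((Lp.memLp f).integrable (Fact.out : 1 ≤ p))
    have hg := ((Lp.memLp g).integrable (Fact.out : 1 ≤ p))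
    have h : ∀ S : Set Ω, ∫ a in S, (f + g : Lp ℝ p μ) a ∂μ
        = (∫ a in S, f a ∂μ) + ∫ a in S, g a ∂μ := fun S => by
      rw [integral_congr_ae (ae_restrict_of_ae (Lp.coeFn_add f g))]
      exact integral_add hf.integrableOn hg.integrableOn
    rw [h, h]; ring
  map_smul' c f := by
    have h : ∀ S : Set Ω, ∫ a in S, (c • f : Lp ℝ p μ) a ∂μ = c * ∫ a in S, f a ∂μ := fun S => by
      rw [integral_congr_ae (ae_restrict_of_ae (Lp.coeFn_smul c f))]
      simp only [Pi.smul_apply, smul_eq_mul, integral_const_mul]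
    simp only [h, RingHom.id_apply, smul_eq_mul]; ring

private lemma abs_setIntLM_le (hp : p ≠ ∞) {S₁ S₂ : Set Ω}
    (h₁ : MeasurableSet S₁) (h₂ : MeasurableSet S₂) (hd : Disjoint S₁ S₂) (f : Lp ℝ p μ) :
    |setIntLM μ p S₁ S₂ f| ≤ (μ (S₁ ∪ S₂)).toReal ^ (1 - 1 / p.toReal) * ‖f‖ := by
  have hint : Integrable f μ := (Lp.memLp f).integrable (Fact.out : 1 ≤ p)
  have habs : Integrable (fun a => |f a|) μ := hint.abs
  have key : ∀ S : Set Ω, |∫ a in S, f a ∂μ| ≤ ∫ a in S, |f a| ∂μ := fun S => by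
    simpa [Real.norm_eq_abs] using
      norm_integral_le_integral_norm (μ := μ.restrict S) (f := fun a => f a)
  have step1 : |setIntLM μ p S₁ S₂ f| ≤ ∫ a in S₁ ∪ S₂, |f a| ∂μ := by
    rw [setIntegral_union hd h₂ habs.integrableOn habs.integrableOn]
    calc |setIntLM μ p S₁ S₂ f| ≤ |∫ a in S₁, f a ∂μ| + |∫ a in S₂, f a ∂μ| := abs_sub _ _
    _ ≤ (∫ a in S₁, |f a| ∂μ) + ∫ a in S₂, |f a| ∂μ := add_le_add (key S₁) (key S₂)
  set B := S₁ ∪ S₂ with hB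
  have hBm : MeasurableSet B := h₁.union h₂
  have e1 : ∫ a in B, |f a| ∂μ = (eLpNorm f 1 (μ.restrict B)).toReal := by
    rw [eLpNorm_one_eq_lintegral_enorm,
      ← integral_norm_eq_lintegral_enorm ((Lp.aestronglyMeasurable f).restrict)]
    simp [Real.norm_eq_abs]
  have e2 : eLpNorm f 1 (μ.restrict B)
      ≤ eLpNorm f p μ * μ B ^ (1 - 1 / p.toReal) := by
    have := eLpNorm_le_eLpNorm_mul_rpow_measure_univ (p := 1) (q := p) (Fact.out : 1 ≤ p)
      ((Lp.aestronglyMeasurable f).restrict (s := B))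
    rw [Measure.restrict_apply_univ] at this
    simp only [ENNReal.toReal_one, one_div, inv_one] at this ⊢
    exact this.trans (mul_le_mul_left (eLpNorm_mono_measure f Measure.restrict_le_self) _)
  have hfin : eLpNorm f p μ * μ B ^ (1 - 1 / p.toReal) ≠ ∞ :=
    ENNReal.mul_ne_top (Lp.eLpNorm_ne_top f)
      (ENNReal.rpow_ne_top_of_nonneg (by
        have h1p : 1 ≤ p.toReal := by
          simpa using ENNReal.toReal_mono hp (Fact.out : 1 ≤ p)
        have : 1 / p.toReal ≤ 1 := by
          rw [div_le_one (by linarith)]; linarith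
        linarith) (measure_ne_top μ B))
  calc |setIntLM μ p S₁ S₂ f| ≤ (eLpNorm f 1 (μ.restrict B)).toReal := by rw [← e1]; exact step1
  _ ≤ (eLpNorm f p μ * μ B ^ (1 - 1 / p.toReal)).toReal := ENNReal.toReal_mono hfin e2
  _ = (μ B).toReal ^ (1 - 1 / p.toReal) * ‖f‖ := by
      rw [ENNReal.toReal_mul, ← ENNReal.toReal_rpow, Lp.norm_def, mul_comm]

private lemma setIntegral_haarFn (t : List Bool → Set Ω) (htm : ∀ α, MeasurableSet (t α))
    (α : List Bool) {S : Set Ω} (hS : MeasurableSet S) :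
    ∫ a in S, haarFn μ p t htm α a ∂μ
      = (μ (t (α ++ [true]) ∩ S)).toReal - (μ (t (α ++ [false]) ∩ S)).toReal := by
  have h1 : IntegrableOn (indicatorConstLp p (htm (α ++ [true])) (measure_ne_top μ _) (1 : ℝ))
      S μ := (((Lp.memLp _).integrable (Fact.out : 1 ≤ p))).integrableOn
  have h2 : IntegrableOn (indicatorConstLp p (htm (α ++ [false])) (measure_ne_top μ _) (1 : ℝ))
      S μ := (((Lp.memLp _).integrable (Fact.out : 1 ≤ p))).integrableOn
  rw [haarFn, integral_congr_ae (ae_restrict_of_ae (Lp.coeFn_sub _ _))]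
  simp only [Pi.sub_apply]
  rw [integral_sub h1 h2, setIntegral_indicatorConstLp hS _ _ _,
    setIntegral_indicatorConstLp hS _ _ _]
  simp
  rfl

private lemma norm_haarFn' (hp : p ≠ ∞) (t : List Bool → Set Ω)
    (htm : ∀ α, MeasurableSet (t α)) (α : List Bool)
    (hd : Disjoint (t (α ++ [true])) (t (α ++ [false])))
    (hu : t (α ++ [true]) ∪ t (α ++ [false]) = t α) :
    ‖haarFn μ p t htm α‖ = (μ (t α)).toReal ^ (1 / p.toReal) := by
  have p0 : p ≠ 0 := (lt_of_lt_of_le zero_lt_one (Fact.out : 1 ≤ p)).ne'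
  rw [Lp.norm_def]
  have hae : (haarFn μ p t htm α : Ω → ℝ) =ᵐ[μ]
      fun a => (t (α ++ [true])).indicator (fun _ => (1 : ℝ)) a
        - (t (α ++ [false])).indicator (fun _ => (1 : ℝ)) a := by
    filter_upwards [Lp.coeFn_sub (indicatorConstLp p (htm (α ++ [true]))
        (measure_ne_top μ _) (1 : ℝ))
        (indicatorConstLp p (htm (α ++ [false])) (measure_ne_top μ _) (1 : ℝ)),
      indicatorConstLp_coeFn (p := p) (hs := htm (α ++ [true]))
        (hμs := measure_ne_top μ _) (c := (1 : ℝ)),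
      indicatorConstLp_coeFn (p := p) (hs := htm (α ++ [false]))
        (hμs := measure_ne_top μ _) (c := (1 : ℝ))] with a h1 h2 h3
    rw [haarFn, h1, Pi.sub_apply, h2, h3]
  rw [eLpNorm_congr_ae hae]
  have hnorm : eLpNorm (fun a => (t (α ++ [true])).indicator (fun _ => (1 : ℝ)) a
      - (t (α ++ [false])).indicator (fun _ => (1 : ℝ)) a) p μ
      = eLpNorm ((t α).indicator (fun _ => (1 : ℝ))) p μ := by
    refine eLpNorm_congr_norm_ae (Eventually.of_forall fun a => ?_)
    rw [← hu]
    by_cases h1 : a ∈ t (α ++ [true])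
    · have h2 : a ∉ t (α ++ [false]) := fun h2 => (hd.le_bot ⟨h1, h2⟩)
      simp [Set.indicator_of_mem, Set.indicator_of_notMem, h1, h2]
    · by_cases h2 : a ∈ t (α ++ [false])
      · simp [Set.indicator_of_mem, Set.indicator_of_notMem, h1, h2]
      · have : a ∉ t (α ++ [true]) ∪ t (α ++ [false]) := by simp [h1, h2]
        simp [Set.indicator_of_notMem, h1, h2, this]
  rw [hnorm, eLpNorm_indicator_const (htm α) p0 hp]
  simp [ENNReal.toReal_mul, ENNReal.toReal_rpow]

end Aux2

/-- Remark 2.2(b). Let `(h_α)` be a Haar-like system on `A` in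
`L_p(μ)`, `ε > 0`, and `(ε_α)` positive numbers with `∑_α ε_α / ‖h_α‖ ≤ ε/2`. If
`(x_α)` are vectors in a Banach space `X` with `‖x_α‖ ≤ ε_α`, then `h_α ↦ x_α` extends
to a bounded linear operator of norm `≤ ε` on the closed linear span of `(h_α)`. -/
theorem extend_haar_to_small_operator
    (μ : Measure Ω) [IsProbabilityMeasure μ] [NullSingletonClass μ]
    (p : ℝ≥0∞) [Fact (1 ≤ p)] (hp : p ≠ ∞)
    {X : Type*} [NormedAddCommGroup X] [NormedSpace ℝ X] [CompleteSpace X]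
    (A : Set Ω) (hA : MeasurableSet A) (hA0 : 0 < μ A)
    (t : List Bool → Set Ω) (ht : IsTreeOn μ A t)
    (ε : ℝ) (hε : 0 < ε) (εa : List Bool → ℝ) (hεa : ∀ α, 0 < εa α)
    (hsummable : Summable fun α : List Bool => εa α / ‖haarFn μ p t ht.meas α‖)
    (hsum : (∑' α : List Bool, εa α / ‖haarFn μ p t ht.meas α‖) ≤ ε / 2)
    (x : List Bool → X) (hx : ∀ α, ‖x α‖ ≤ εa α) :
    ∃ U : ↥((Submodule.span ℝ
        (Set.range (haarFn μ p t ht.meas))).topologicalClosure) →L[ℝ] X,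
      (∀ α : List Bool,
        U ⟨haarFn μ p t ht.meas α, haarFn_mem_closedSpan μ p t ht.meas α⟩ = x α) ∧
      ‖U‖ ≤ ε := by
  classical
  set s : ℝ := 1 / p.toReal with hsdef
  set c : List Bool → ℝ := fun α => (μ (t α)).toReal with hcdef
  have hcpos : ∀ α, 0 < c α := fun α =>
    ENNReal.toReal_pos (ht.measure_pos hA0 α).ne' (measure_ne_top μ _)
  have hnormh : ∀ α, ‖haarFn μ p t ht.meas α‖ = c α ^ s := fun α =>
    norm_haarFn' μ p hp t ht.meas α (ht.disj α) (ht.union α)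
  -- the biorthogonal functionals
  have hφbound : ∀ α f, |setIntLM μ p (t (α ++ [true])) (t (α ++ [false])) f|
      ≤ c α ^ (1 - s) * ‖f‖ := by
    intro α f
    have := abs_setIntLM_le μ p hp (ht.meas _) (ht.meas _) (ht.disj α) f
    rwa [ht.union α] at this
  set φ : List Bool → (Lp ℝ p μ →L[ℝ] ℝ) := fun α =>
    LinearMap.mkContinuous _ (c α ^ (1 - s)) (hφbound α) with hφdef
  set T : List Bool → (Lp ℝ p μ →L[ℝ] X) := fun α =>
    (φ α).smulRight ((c α)⁻¹ • x α) with hTdef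
  have hφnorm : ∀ α, ‖φ α‖ ≤ c α ^ (1 - s) := fun α =>
    LinearMap.mkContinuous_norm_le _ (Real.rpow_nonneg (hcpos α).le _) _
  have hTnorm : ∀ α, ‖T α‖ ≤ εa α / ‖haarFn μ p t ht.meas α‖ := by
    intro α
    rw [hnormh]
    have h2 : ‖(c α)⁻¹ • x α‖ ≤ (c α)⁻¹ * εa α := by
      rw [norm_smul, Real.norm_eq_abs, abs_of_pos (inv_pos.mpr (hcpos α))]
      exact mul_le_mul_of_nonneg_left (hx α) (inv_pos.mpr (hcpos α)).le
    calc ‖T α‖ = ‖φ α‖ * ‖(c α)⁻¹ • x α‖ := ContinuousLinearMap.norm_smulRight_apply _ _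
    _ ≤ c α ^ (1 - s) * ((c α)⁻¹ * εa α) :=
        mul_le_mul (hφnorm α) h2 (norm_nonneg _) (Real.rpow_nonneg (hcpos α).le _)
    _ = εa α / c α ^ s := by
        rw [Real.rpow_sub (hcpos α), Real.rpow_one]
        have hc1 : c α ≠ 0 := (hcpos α).ne'
        have hc2 : c α ^ s ≠ 0 := (Real.rpow_pos_of_pos (hcpos α) s).ne'
        field_simp
  -- biorthogonality
  have hval : ∀ β α, φ β (haarFn μ p t ht.meas α) =
      ((μ (t (α ++ [true]) ∩ t (β ++ [true]))).toReal
        - (μ (t (α ++ [false]) ∩ t (β ++ [true]))).toReal)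
      - ((μ (t (α ++ [true]) ∩ t (β ++ [false]))).toReal
        - (μ (t (α ++ [false]) ∩ t (β ++ [false]))).toReal) := by
    intro β α
    show setIntLM μ p (t (β ++ [true])) (t (β ++ [false])) (haarFn μ p t ht.meas α) = _
    simp only [setIntLM, LinearMap.coe_mk, AddHom.coe_mk]
    rw [setIntegral_haarFn μ p t ht.meas α (ht.meas (β ++ [true])),
      setIntegral_haarFn μ p t ht.meas α (ht.meas (β ++ [false]))]
  have hφself : ∀ α, φ α (haarFn μ p t ht.meas α) = c α := by
    intro α
    rw [hval α α, Set.inter_self, Set.inter_self, (ht.disj α).inter_eq,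
      Disjoint.inter_eq (ht.disj α).symm]
    have : μ (t α) = μ (t (α ++ [true])) + μ (t (α ++ [false])) := by
      rw [← ht.union α]; exact measure_union (ht.disj α) (ht.meas _)
    simp only [measure_empty, ENNReal.toReal_zero, sub_zero, zero_sub, sub_neg_eq_add, hcdef]
    rw [this, ENNReal.toReal_add (measure_ne_top μ _) (measure_ne_top μ _)]
  have hφzero : ∀ β α, β ≠ α → φ β (haarFn μ p t ht.meas α) = 0 := by
    intro β α hne
    rw [hval β α]
    by_cases h1 : α <+: β
    · -- β strictly extends α
      obtain ⟨γ, rfl⟩ := h1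
      have hγ : γ ≠ [] := by rintro rfl; simp at hne
      obtain ⟨b, r, rfl⟩ : ∃ b r, γ = b :: r := by
        cases γ with
        | nil => exact absurd rfl hγ
        | cons b r => exact ⟨b, r, rfl⟩
      have hsub : ∀ i : Bool, t ((α ++ b :: r) ++ [i]) ⊆ t (α ++ [b]) :=
        fun i => ht.subset_of_prefix ⟨r ++ [i], by simp⟩
      cases b
      · -- b = false : children of β are inside t (α ++ [false])
        have hz : ∀ i : Bool, μ (t (α ++ [true]) ∩ t ((α ++ false :: r) ++ [i])) = 0 := by
          intro i
          have hdisj : Disjoint (t (α ++ [true])) (t ((α ++ false :: r) ++ [i])) :=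
            (ht.disj α).mono_right (hsub i)
          rw [hdisj.inter_eq, measure_empty]
        have he : ∀ i : Bool, t (α ++ [false]) ∩ t ((α ++ false :: r) ++ [i])
            = t ((α ++ false :: r) ++ [i]) :=
          fun i => Set.inter_eq_self_of_subset_right (hsub i)
        rw [hz true, hz false, he true, he false, ht.eqmeas (α ++ false :: r)]
        ring
      · -- b = true
        have hz : ∀ i : Bool, μ (t (α ++ [false]) ∩ t ((α ++ true :: r) ++ [i])) = 0 := by
          intro i
          have hdisj : Disjoint (t (α ++ [false])) (t ((α ++ true :: r) ++ [i])) :=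
            (ht.disj α).symm.mono_right (hsub i)
          rw [hdisj.inter_eq, measure_empty]
        have he : ∀ i : Bool, t (α ++ [true]) ∩ t ((α ++ true :: r) ++ [i])
            = t ((α ++ true :: r) ++ [i]) :=
          fun i => Set.inter_eq_self_of_subset_right (hsub i)
        rw [hz true, hz false, he true, he false, ht.eqmeas (α ++ true :: r)]
        ring
    · by_cases h2 : β <+: α
      · -- α strictly extends β
        obtain ⟨γ, rfl⟩ := h2
        have hγ : γ ≠ [] := by rintro rfl; simp at hne
        obtain ⟨b, r, rfl⟩ : ∃ b r, γ = b :: r := by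
          cases γ with
          | nil => exact absurd rfl hγ
          | cons b r => exact ⟨b, r, rfl⟩
        have hsub : ∀ j : Bool, t ((β ++ b :: r) ++ [j]) ⊆ t (β ++ [b]) :=
          fun j => ht.subset_of_prefix ⟨r ++ [j], by simp⟩
        cases b
        · have hz : ∀ j : Bool, μ (t ((β ++ false :: r) ++ [j]) ∩ t (β ++ [true])) = 0 := by
            intro j
            have hdisj : Disjoint (t ((β ++ false :: r) ++ [j])) (t (β ++ [true])) :=
              ((ht.disj β).symm.mono_left (hsub j))
            rw [hdisj.inter_eq, measure_empty]
          have he : ∀ j : Bool, t ((β ++ false :: r) ++ [j]) ∩ t (β ++ [false])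
              = t ((β ++ false :: r) ++ [j]) :=
            fun j => Set.inter_eq_self_of_subset_left (hsub j)
          rw [hz true, hz false, he true, he false, ht.eqmeas (β ++ false :: r)]
          ring
        · have hz : ∀ j : Bool, μ (t ((β ++ true :: r) ++ [j]) ∩ t (β ++ [false])) = 0 := by
            intro j
            have hdisj : Disjoint (t ((β ++ true :: r) ++ [j])) (t (β ++ [false])) :=
              ((ht.disj β).mono_left (hsub j))
            rw [hdisj.inter_eq, measure_empty]
          have he : ∀ j : Bool, t ((β ++ true :: r) ++ [j]) ∩ t (β ++ [true])
              = t ((β ++ true :: r) ++ [j]) :=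
            fun j => Set.inter_eq_self_of_subset_left (hsub j)
          rw [hz true, hz false, he true, he false, ht.eqmeas (β ++ true :: r)]
          ring
      · -- incomparable
        have hd : Disjoint (t α) (t β) := ht.disjoint_of_incomparable h1 h2
        have hz : ∀ j i : Bool, μ (t (α ++ [j]) ∩ t (β ++ [i])) = 0 := by
          intro j i
          have hss : t (α ++ [j]) ∩ t (β ++ [i]) ⊆ (∅ : Set Ω) := by
            rw [← hd.inter_eq]
            exact Set.inter_subset_inter (ht.child_subset α j) (ht.child_subset β i)
          exact measure_mono_null hss measure_empty
        rw [hz true true, hz false true, hz true false, hz false false]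
        ring
  -- the candidate operator terms
  have hThaar : ∀ α, T α (haarFn μ p t ht.meas α) = x α := by
    intro α
    simp only [hTdef, ContinuousLinearMap.smulRight_apply]
    rw [hφself α, smul_smul, mul_inv_cancel₀ (hcpos α).ne', one_smul]
  have hThaar0 : ∀ β α, β ≠ α → T β (haarFn μ p t ht.meas α) = 0 := by
    intro β α hne
    simp only [hTdef, ContinuousLinearMap.smulRight_apply]
    rw [hφzero β α hne, zero_smul]
  -- summability
  have hsummable' : Summable fun α => ‖T α‖ :=
    Summable.of_nonneg_of_le (fun _ => norm_nonneg _) hTnorm hsummable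
  have hTsum : Summable T := Summable.of_norm hsummable'
  set U₀ : Lp ℝ p μ →L[ℝ] X := ∑' α, T α with hU₀def
  have hU₀norm : ‖U₀‖ ≤ ε / 2 :=
    (norm_tsum_le_tsum_norm hsummable').trans
      ((Summable.tsum_le_tsum hTnorm hsummable' hsummable).trans hsum)
  have hU₀apply : ∀ α, U₀ (haarFn μ p t ht.meas α) = x α := by
    intro α
    have h1 : U₀ (haarFn μ p t ht.meas α) = ∑' β, T β (haarFn μ p t ht.meas α) :=
      (ContinuousLinearMap.apply ℝ X (haarFn μ p t ht.meas α)).map_tsum hTsum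
    rw [h1, tsum_eq_single α (fun β hβ => hThaar0 β α hβ), hThaar α]
  refine ⟨U₀.comp (Submodule.subtypeL _), fun α => hU₀apply α, ?_⟩
  refine ContinuousLinearMap.opNorm_le_bound _ hε.le fun f => ?_
  calc ‖(U₀.comp (Submodule.subtypeL _)) f‖ = ‖U₀ (f : Lp ℝ p μ)‖ := rfl
  _ ≤ ‖U₀‖ * ‖(f : Lp ℝ p μ)‖ := U₀.le_opNorm _
  _ ≤ (ε / 2) * ‖f‖ := by
      rw [Submodule.norm_coe]
      exact mul_le_mul_of_nonneg_right hU₀norm (norm_nonneg _)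
  _ ≤ ε * ‖f‖ := mul_le_mul_of_nonneg_right (by linarith) (norm_nonneg _)
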